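/- In the ILT model, for any two distinct nodes x, y of G_t (t ≥ 0), the graph distances in G_{t+1} satisfy d_{t+1}(x', y) = d_{t+1}(x, y') = d_{t+1}(x, y) = d_t(x, y), where x', y' are the clones of x and y. -/

import Mathlib

open SimpleGraph Finset

universe u
variable {V : Type u}

/-- One step of the Iterated Local Transitivity model: every vertex `x` gets a
clone `Sum.inr x` joined to `x` and all of its neighbours; old vertices are `Sum.inl`. -/
def ILTstep (G : SimpleGraph V) : SimpleGraph (V ⊕ V) where
  Adj a b := match a, b with
    | Sum.inl x, Sum.inl y => G.Adj x y
    | Sum.inl x, Sum.inr y => x = y ∨ G.Adj x y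
    | Sum.inr x, Sum.inl y => x = y ∨ G.Adj x y
    | Sum.inr _, Sum.inr _ => False
  symm := by
    constructor
    rintro (x | x) (y | y) h
    · exact G.adj_symm h
    · exact h.imp Eq.symm (fun hh => G.adj_symm hh)
    · exact h.imp Eq.symm (fun hh => G.adj_symm hh)
    · exact h.elim
  loopless := by
    constructor
    rintro (x | x) h
    · exact G.irrefl h
    · exact h

instance ILTstepDecAdj (G : SimpleGraph V) [DecidableEq V] [DecidableRel G.Adj] :
    DecidableRel (ILTstep G).Adj := fun a b =>
  match a, b with
  | Sum.inl x, Sum.inl y => inferInstanceAs (Decidable (G.Adj x y))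
  | Sum.inl x, Sum.inr y => inferInstanceAs (Decidable (x = y ∨ G.Adj x y))
  | Sum.inr x, Sum.inl y => inferInstanceAs (Decidable (x = y ∨ G.Adj x y))
  | Sum.inr _, Sum.inr _ => inferInstanceAs (Decidable False)

/-- The vertex set of the ILT model at time `t`. -/
def ILTV (V : Type u) : ℕ → Type u
  | 0 => V
  | t + 1 => ILTV V t ⊕ ILTV V t

/-- The graph of the ILT model at time `t`, starting from `G`. -/
def ILTG (G : SimpleGraph V) : (t : ℕ) → SimpleGraph (ILTV V t)
  | 0 => G
  | t + 1 => ILTstep (ILTG G t)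

instance ILTVFintype [Fintype V] : ∀ t, Fintype (ILTV V t)
  | 0 => inferInstanceAs (Fintype V)
  | t + 1 => letI := ILTVFintype t
             inferInstanceAs (Fintype (ILTV V t ⊕ ILTV V t))

instance ILTVDecEq [DecidableEq V] : ∀ t, DecidableEq (ILTV V t)
  | 0 => inferInstanceAs (DecidableEq V)
  | t + 1 => letI := ILTVDecEq t
             inferInstanceAs (DecidableEq (ILTV V t ⊕ ILTV V t))

instance ILTGDecAdj (G : SimpleGraph V) [DecidableEq V] [DecidableRel G.Adj] :
    ∀ t, DecidableRel (ILTG G t).Adj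
  | 0 => inferInstanceAs (DecidableRel G.Adj)
  | t + 1 => letI : DecidableEq (ILTV V t) := ILTVDecEq t
             letI : DecidableRel (ILTG G t).Adj := ILTGDecAdj G t
             ILTstepDecAdj (ILTG G t)

/-- The volume of a graph: the sum of the degrees of its vertices. -/
def graphVol [Fintype V] (G : SimpleGraph V) [DecidableRel G.Adj] : ℕ :=
  ∑ v, G.degree v

/-- The Wiener index: the sum of distances over unordered pairs of vertices. -/
noncomputable def wienerIndex [Fintype V] (G : SimpleGraph V) : ℕ :=
  (∑ x : V, ∑ y : V, G.dist x y) / 2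

def ILThom (G : SimpleGraph V) : G →g ILTstep G := ⟨Sum.inl, fun h => h⟩

lemma ILT_adj_proj {G : SimpleGraph V} {a b : V ⊕ V} (h : (ILTstep G).Adj a b) :
    Sum.elim id id a = Sum.elim id id b ∨ G.Adj (Sum.elim id id a) (Sum.elim id id b) := by
  cases a <;> cases b <;> simp_all [ILTstep]

lemma ILT_dist_lower {G : SimpleGraph V} (hG : G.Connected) :
    ∀ {a b : V ⊕ V} (w : (ILTstep G).Walk a b),
      G.dist (Sum.elim id id a) (Sum.elim id id b) ≤ w.length := by
  intro a b w
  induction w with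
  | nil => simp
  | @cons a c b h w ih =>
    rcases ILT_adj_proj h with he | ha
    · rw [Walk.length_cons, he]
      omega
    · calc G.dist (Sum.elim id id a) (Sum.elim id id b)
          ≤ G.dist (Sum.elim id id a) (Sum.elim id id c)
            + G.dist (Sum.elim id id c) (Sum.elim id id b) := hG.dist_triangle
        _ ≤ 1 + w.length := by
            have h1 : G.dist (Sum.elim id id a) (Sum.elim id id c) ≤ 1 :=
              SimpleGraph.dist_le (Walk.cons ha Walk.nil)
            omega
        _ = (Walk.cons h w).length := by rw [Walk.length_cons]; omega

lemma ILT_dist_lower' {G : SimpleGraph V} (hG : G.Connected) {a b : V ⊕ V}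
    (r : (ILTstep G).Reachable a b) :
    G.dist (Sum.elim id id a) (Sum.elim id id b) ≤ (ILTstep G).dist a b := by
  obtain ⟨w2, hw2⟩ := r.exists_walk_length_eq_dist
  exact hw2 ▸ ILT_dist_lower hG w2

lemma ILT_dist_inl {G : SimpleGraph V} (hG : G.Connected) (x y : V) :
    (ILTstep G).dist (Sum.inl x) (Sum.inl y) = G.dist x y := by
  obtain ⟨w, hw⟩ := (hG x y).exists_walk_length_eq_dist
  refine le_antisymm ?_ (ILT_dist_lower' hG ⟨w.map (ILThom G)⟩)
  have := SimpleGraph.dist_le (w.map (ILThom G))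
  exact this.trans_eq (by simp [hw])

lemma ILT_dist_inr {G : SimpleGraph V} (hG : G.Connected) {x y : V} (hxy : x ≠ y) :
    (ILTstep G).dist (Sum.inr x) (Sum.inl y) = G.dist x y := by
  obtain ⟨w, hw⟩ := (hG x y).exists_walk_length_eq_dist
  cases w with
  | nil => exact absurd rfl hxy
  | @cons _ z _ h w' =>
    have hlen : w'.length + 1 = G.dist x y := by simpa using hw
    refine le_antisymm ?_ ?_
    · have := SimpleGraph.dist_le
        (Walk.cons (show (ILTstep G).Adj (Sum.inr x) (Sum.inl z) from Or.inr h)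
          (w'.map (ILThom G)))
      exact this.trans_eq ((Walk.length_cons _ _).trans ((congrArg (· + 1) (Walk.length_map _ _)).trans hlen))
    · exact ILT_dist_lower' hG
        ⟨Walk.cons (show (ILTstep G).Adj (Sum.inr x) (Sum.inl z) from Or.inr h)
          (w'.map (ILThom G))⟩

theorem ILT_dist_clone (G : SimpleGraph V) (hG : G.Connected)
    (x y : V) (hxy : x ≠ y) :
    (ILTstep G).dist (Sum.inr x) (Sum.inl y) = G.dist x y ∧
    (ILTstep G).dist (Sum.inl x) (Sum.inr y) = G.dist x y ∧
    (ILTstep G).dist (Sum.inl x) (Sum.inl y) = G.dist x y := by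
  refine ⟨ILT_dist_inr hG hxy, ?_, ILT_dist_inl hG x y⟩
  rw [SimpleGraph.dist_comm, ILT_dist_inr hG hxy.symm, SimpleGraph.dist_comm]
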